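/- Let H be a Hopf algebra. The set Z²_L(H) of normalized convolution-invertible lazy left 2-cocycles on H is closed under convolution product, the convolution inverse of a lazy 2-cocycle is again a lazy 2-cocycle, and hence Z²_L(H) is a group under convolution. -/

import Mathlib

open TensorProduct

noncomputable section

universe u

section Defs

variable {k : Type u} [CommRing k] {H : Type u} [Ring H] [Bialgebra k H]

/-- Convolution product on the dual of a coalgebra. -/
def conv {C : Type u} [AddCommGroup C] [Module k C] [Coalgebra k C]
    (f g : C →ₗ[k] k) : C →ₗ[k] k :=
  LinearMap.mul' k k ∘ₗ TensorProduct.map f g ∘ₗ Coalgebra.comul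

/-- `a ⊗ b ↦ a · ε(b)`. -/
def pr1 : H ⊗[k] H →ₗ[k] H :=
  (TensorProduct.rid k H).toLinearMap ∘ₗ TensorProduct.map LinearMap.id Coalgebra.counit

/-- `a ⊗ (b ⊗ c) ↦ ε(a) · (b ⊗ c)`. -/
def dropL3 : H ⊗[k] (H ⊗[k] H) →ₗ[k] H ⊗[k] H :=
  (TensorProduct.lid k (H ⊗[k] H)).toLinearMap ∘ₗ TensorProduct.map Coalgebra.counit LinearMap.id

/-- Multiplication of `H` as a linear map `H ⊗ H → H`. -/
def mulH : H ⊗[k] H →ₗ[k] H := LinearMap.mul' k H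

/-- `σ` is normalized: `σ(1,h) = ε(h) = σ(h,1)`. -/
def Normalized (σ : H ⊗[k] H →ₗ[k] k) : Prop :=
  ∀ h : H, σ (1 ⊗ₜ[k] h) = Coalgebra.counit (R := k) h ∧
    σ (h ⊗ₜ[k] 1) = Coalgebra.counit (R := k) h

/-- Left 2-cocycle condition: `σ(a₁,b₁)σ(a₂b₂,c) = σ(b₁,c₁)σ(a,b₂c₂)`, expressed as an
equality of linear functionals on `H ⊗ (H ⊗ H)` (convolution of the indicated factors). -/
def IsLeftCocycle (σ : H ⊗[k] H →ₗ[k] k) : Prop :=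
  conv (σ ∘ₗ TensorProduct.map LinearMap.id pr1)
      (σ ∘ₗ TensorProduct.map mulH LinearMap.id ∘ₗ (TensorProduct.assoc k H H H).symm.toLinearMap)
  = conv (σ ∘ₗ dropL3) (σ ∘ₗ TensorProduct.map LinearMap.id mulH)

/-- Right 2-cocycle condition: `σ(a₁b₁,c)σ(a₂,b₂) = σ(a,b₁c₁)σ(b₂,c₂)`. -/
def IsRightCocycle (σ : H ⊗[k] H →ₗ[k] k) : Prop :=
  conv (σ ∘ₗ TensorProduct.map mulH LinearMap.id ∘ₗ (TensorProduct.assoc k H H H).symm.toLinearMap)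
      (σ ∘ₗ TensorProduct.map LinearMap.id pr1)
  = conv (σ ∘ₗ TensorProduct.map LinearMap.id mulH) (σ ∘ₗ dropL3)

/-- Laziness for `σ : H ⊗ H → k`: `σ(h₁,h'₁)h₂h'₂ = h₁h'₁σ(h₂,h'₂)`. -/
def IsLazy2 (σ : H ⊗[k] H →ₗ[k] k) : Prop :=
  (TensorProduct.lid k H).toLinearMap ∘ₗ TensorProduct.map σ mulH ∘ₗ Coalgebra.comul
  = (TensorProduct.rid k H).toLinearMap ∘ₗ TensorProduct.map mulH σ ∘ₗ Coalgebra.comul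

/-- Laziness for `γ : H → k`: `γ(h₁)h₂ = h₁γ(h₂)`. -/
def IsLazy1 (γ : H →ₗ[k] k) : Prop :=
  (TensorProduct.lid k H).toLinearMap ∘ₗ TensorProduct.map γ LinearMap.id ∘ₗ Coalgebra.comul
  = (TensorProduct.rid k H).toLinearMap ∘ₗ TensorProduct.map LinearMap.id γ ∘ₗ Coalgebra.comul

/-- Neatness: `σ(a,b₁)σ(b₂,c) = σ(b₁,c)σ(a,b₂)`. -/
def Neat2 (σ : H ⊗[k] H →ₗ[k] k) : Prop :=
  conv (σ ∘ₗ TensorProduct.map LinearMap.id pr1) (σ ∘ₗ dropL3)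
  = conv (σ ∘ₗ dropL3) (σ ∘ₗ TensorProduct.map LinearMap.id pr1)

/-- `a ⊗ (b ⊗ (c ⊗ d)) ↦ ε(a) (b ⊗ (c ⊗ d))`. -/
def dropL4 : H ⊗[k] (H ⊗[k] (H ⊗[k] H)) →ₗ[k] H ⊗[k] (H ⊗[k] H) :=
  (TensorProduct.lid k (H ⊗[k] (H ⊗[k] H))).toLinearMap ∘ₗ
    TensorProduct.map Coalgebra.counit LinearMap.id

/-- `(a,b,c,d) ↦ σ(ab, c) ε(d)`. -/
def fPure (σ : H ⊗[k] H →ₗ[k] k) : H ⊗[k] (H ⊗[k] (H ⊗[k] H)) →ₗ[k] k :=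
  σ ∘ₗ TensorProduct.map mulH LinearMap.id ∘ₗ (TensorProduct.assoc k H H H).symm.toLinearMap ∘ₗ
    TensorProduct.map LinearMap.id (TensorProduct.map LinearMap.id pr1)

/-- `(a,b,c,d) ↦ ε(a) τ(b, c) ε(d)`. -/
def gPure (τ : H ⊗[k] H →ₗ[k] k) : H ⊗[k] (H ⊗[k] (H ⊗[k] H)) →ₗ[k] k :=
  τ ∘ₗ TensorProduct.map LinearMap.id pr1 ∘ₗ dropL4

/-- `(a,b,c,d) ↦ ε(a) σ(b, cd)`. -/
def hPure (σ : H ⊗[k] H →ₗ[k] k) : H ⊗[k] (H ⊗[k] (H ⊗[k] H)) →ₗ[k] k :=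
  σ ∘ₗ TensorProduct.map LinearMap.id mulH ∘ₗ dropL4

/-- Purity for a map `σ` with convolution inverse `τ = σ⁻¹`:
`σ(ab₁,c₁)σ⁻¹(b₂,c₂)σ(b₃,c₃d) = σ(b₁,c₁d)σ⁻¹(b₂,c₂)σ(ab₃,c₃)`. -/
def Pure2 (σ τ : H ⊗[k] H →ₗ[k] k) : Prop :=
  conv (C := H ⊗[k] (H ⊗[k] (H ⊗[k] H))) (conv (fPure σ) (gPure τ)) (hPure σ)
  = conv (C := H ⊗[k] (H ⊗[k] (H ⊗[k] H))) (conv (hPure σ) (gPure τ)) (fPure σ)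

/-- `D¹(γ)(h,h') = γ(h₁)γ(h'₁)γinv(h₂h'₂)` where `γinv` is the convolution inverse of `γ`. -/
def D1 (γ γinv : H →ₗ[k] k) : H ⊗[k] H →ₗ[k] k :=
  conv (LinearMap.mul' k k ∘ₗ TensorProduct.map γ γ) (γinv ∘ₗ mulH)

/-- The deformed product `h ·σ h' = σ(h₁,h'₁) h₂h'₂`. -/
def mulSig (σ : H ⊗[k] H →ₗ[k] k) : H ⊗[k] H →ₗ[k] H :=
  (TensorProduct.lid k H).toLinearMap ∘ₗ TensorProduct.map σ mulH ∘ₗ Coalgebra.comul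

/-- Neatness for `γ : H → k`: `γ(ab₁)γ(b₂c) = γ(b₁c)γ(ab₂)`. -/
def Neat1 (γ : H →ₗ[k] k) : Prop :=
  conv (γ ∘ₗ mulH ∘ₗ TensorProduct.map LinearMap.id pr1) (γ ∘ₗ mulH ∘ₗ dropL3)
  = conv (γ ∘ₗ mulH ∘ₗ dropL3) (γ ∘ₗ mulH ∘ₗ TensorProduct.map LinearMap.id pr1)

/-- `γ ∈ Reg¹(H)`: normalized and convolution invertible. -/
def Reg1 (γ : H →ₗ[k] k) : Prop :=
  γ 1 = 1 ∧ ∃ δ : H →ₗ[k] k, conv γ δ = (Coalgebra.counit : H →ₗ[k] k) ∧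
    conv δ γ = (Coalgebra.counit : H →ₗ[k] k)

/-- `σ ∈ Reg²(H)`: normalized and convolution invertible. -/
def Reg2 (σ : H ⊗[k] H →ₗ[k] k) : Prop :=
  Normalized σ ∧ ∃ τ : H ⊗[k] H →ₗ[k] k,
    conv σ τ = (Coalgebra.counit : H ⊗[k] H →ₗ[k] k) ∧
    conv τ σ = (Coalgebra.counit : H ⊗[k] H →ₗ[k] k)

/-- `a ⊗ b ↦ γ(a b₁) b₂`. -/
def stmt17L (γ : H →ₗ[k] k) : H ⊗[k] H →ₗ[k] H :=
  (TensorProduct.lid k H).toLinearMap ∘ₗ TensorProduct.map (γ ∘ₗ mulH) LinearMap.id ∘ₗ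
    (TensorProduct.assoc k H H H).symm.toLinearMap ∘ₗ
      TensorProduct.map LinearMap.id Coalgebra.comul

/-- `a ⊗ b ↦ γ(a b₂) b₁`. -/
def stmt17R (γ : H →ₗ[k] k) : H ⊗[k] H →ₗ[k] H :=
  (TensorProduct.lid k H).toLinearMap ∘ₗ TensorProduct.map (γ ∘ₗ mulH) LinearMap.id ∘ₗ
    (TensorProduct.assoc k H H H).symm.toLinearMap ∘ₗ
      TensorProduct.map LinearMap.id
        ((TensorProduct.comm k H H).toLinearMap ∘ₗ Coalgebra.comul)

end Defs
section Infra
variable {k : Type u} [CommRing k]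

def cv {C A : Type u} [AddCommGroup C] [Module k C] [Coalgebra k C]
    [Ring A] [Algebra k A] (f g : C →ₗ[k] A) : C →ₗ[k] A :=
  LinearMap.mul' k A ∘ₗ TensorProduct.map f g ∘ₗ Coalgebra.comul

variable {C A : Type u} [AddCommGroup C] [Module k C] [Coalgebra k C] [Ring A] [Algebra k A]

lemma cv_repr (f g : C →ₗ[k] A) {x : C} (r : Coalgebra.Repr k x (C × C)) :
    cv f g x = ∑ i ∈ r.index, f (r.left i) * g (r.right i) := by
  simp only [cv, LinearMap.comp_apply]
  rw [← r.eq]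
  simp [LinearMap.mul'_apply]

lemma cv_assoc {C A : Type u} [AddCommGroup C] [Module k C] [Coalgebra k C]
    [Ring A] [Algebra k A] (f g h : C →ₗ[k] A) : cv (cv f g) h = cv f (cv g h) := by
  apply LinearMap.ext; intro x
  set r : Coalgebra.Repr k x (C × C) := .arbitrary k x
  set a₁ : (i : C × C) → Coalgebra.Repr k (r.left i) (C × C) := fun i => .arbitrary k _
  set a₂ : (i : C × C) → Coalgebra.Repr k (r.right i) (C × C) := fun i => .arbitrary k _
  rw [cv_repr _ _ r, cv_repr _ _ r]
  have key := Coalgebra.sum_map_tmul_tmul_eq f g h x (repr := r) (a₁ := a₁) (a₂ := a₂)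
  apply_fun (LinearMap.mul' k A ∘ₗ LinearMap.lTensor A (LinearMap.mul' k A)) at key
  simp only [map_sum, LinearMap.comp_apply, LinearMap.lTensor_tmul, LinearMap.mul'_apply] at key
  calc ∑ i ∈ r.index, cv f g (r.left i) * h (r.right i)
      = ∑ i ∈ r.index, ∑ j ∈ (a₁ i).index,
          f ((a₁ i).left j) * (g ((a₁ i).right j) * h (r.right i)) := by
        refine Finset.sum_congr rfl fun i _ => ?_
        rw [cv_repr f g (a₁ i), Finset.sum_mul]
        simp [mul_assoc]
    _ = ∑ i ∈ r.index, ∑ j ∈ (a₂ i).index,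
          f (r.left i) * (g ((a₂ i).left j) * h ((a₂ i).right j)) := key.symm
    _ = ∑ i ∈ r.index, f (r.left i) * cv g h (r.right i) := by
        refine Finset.sum_congr rfl fun i _ => ?_
        rw [cv_repr g h (a₂ i), Finset.mul_sum]

/-- the unit of the convolution algebra -/
def cu (C A : Type u) [AddCommGroup C] [Module k C] [Coalgebra k C]
    [Ring A] [Algebra k A] : C →ₗ[k] A :=
  Algebra.linearMap k A ∘ₗ Coalgebra.counit

lemma sum_counit_smul {x : C} (r : Coalgebra.Repr k x (C × C)) :
    ∑ i ∈ r.index, Coalgebra.counit (R := k) (r.left i) • r.right i = x := by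
  have := Coalgebra.sum_counit_tmul_eq r
  apply_fun (TensorProduct.lid k C) at this
  simp only [map_sum, TensorProduct.lid_tmul, one_smul] at this
  exact this

lemma sum_smul_counit {x : C} (r : Coalgebra.Repr k x (C × C)) :
    ∑ i ∈ r.index, Coalgebra.counit (R := k) (r.right i) • r.left i = x := by
  have := Coalgebra.sum_tmul_counit_eq r
  apply_fun (TensorProduct.rid k C) at this
  simp only [map_sum, TensorProduct.rid_tmul, one_smul] at this
  exact this

lemma cv_one_right (f : C →ₗ[k] A) : cv f (cu C A) = f := by
  apply LinearMap.ext; intro x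
  set r : Coalgebra.Repr k x (C × C) := .arbitrary k x
  rw [cv_repr _ _ r]
  calc ∑ i ∈ r.index, f (r.left i) * cu C A (r.right i)
      = f (∑ i ∈ r.index, Coalgebra.counit (R := k) (r.right i) • r.left i) := by
        simp [cu, Algebra.linearMap_apply, Algebra.smul_def, Finset.mul_sum, mul_comm]
        refine Finset.sum_congr rfl fun i _ => ?_
        rw [← Algebra.commutes]
    _ = f x := by rw [sum_smul_counit r]

lemma cv_one_left (f : C →ₗ[k] A) : cv (cu C A) f = f := by
  apply LinearMap.ext; intro x
  set r : Coalgebra.Repr k x (C × C) := .arbitrary k x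
  rw [cv_repr _ _ r]
  calc ∑ i ∈ r.index, cu C A (r.left i) * f (r.right i)
      = f (∑ i ∈ r.index, Coalgebra.counit (R := k) (r.left i) • r.right i) := by
        simp [cu, Algebra.linearMap_apply, ← Algebra.smul_def, Finset.mul_sum]
    _ = f x := by rw [sum_counit_smul r]

variable {D : Type u} [AddCommGroup D] [Module k D] [Coalgebra k D]

lemma cv_comp (φ : C →ₗc[k] D) (f g : D →ₗ[k] A) :
    cv f g ∘ₗ φ.toLinearMap = cv (f ∘ₗ φ.toLinearMap) (g ∘ₗ φ.toLinearMap) := by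
  simp only [cv, LinearMap.comp_assoc]
  rw [← φ.map_comp_comul, ← LinearMap.comp_assoc _ _ (TensorProduct.map f g),
    ← TensorProduct.map_comp]

lemma cu_comp (φ : C →ₗc[k] D) : cu D A ∘ₗ φ.toLinearMap = cu C A := by
  simp only [cu, LinearMap.comp_assoc, φ.counit_comp]

section Bialg
variable {k : Type u} [CommRing k] {H : Type u} [Ring H] [Bialgebra k H]

lemma counit_k_eq : (Coalgebra.counit : k →ₗ[k] k) = LinearMap.id := rfl

/-- the unit of a bialgebra as a coalgebra morphism -/
def unitCoalg : k →ₗc[k] H :=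
  { Algebra.linearMap k H with
    counit_comp := by
      apply LinearMap.ext; intro r
      simp [Algebra.linearMap_apply]
    map_comp_comul := by
      apply LinearMap.ext_ring
      simp [Algebra.TensorProduct.one_def, CommSemiring.comul_apply] }

/-- multiplication of a bialgebra as a coalgebra morphism -/
lemma mul'_tensor :
    (LinearMap.mul' k (H ⊗[k] H)) =
      TensorProduct.map (LinearMap.mul' k H) (LinearMap.mul' k H) ∘ₗ
        (TensorProduct.tensorTensorTensorComm k H H H H).toLinearMap := by
  ext w x y z
  simp [LinearMap.mul'_apply, Algebra.TensorProduct.tmul_mul_tmul]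

def mulCoalg : H ⊗[k] H →ₗc[k] H :=
  { LinearMap.mul' k H with
    counit_comp := by
      ext a b
      simp [LinearMap.mul'_apply, mul_comm]
    map_comp_comul := by
      ext a b
      simp only [LinearMap.comp_apply, TensorProduct.AlgebraTensorModule.curry_apply,
        TensorProduct.curry_apply, LinearMap.coe_restrictScalars, LinearMap.mul'_apply,
        TensorProduct.comul_tmul, TensorProduct.map_tmul]
      rw [Bialgebra.comul_mul]
      have := LinearMap.congr_fun (mul'_tensor (k := k) (H := H)).symm
        ((Coalgebra.comul (R := k) a) ⊗ₜ[k] (Coalgebra.comul (R := k) b))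
      simpa [LinearMap.mul'_apply, TensorProduct.AlgebraTensorModule.tensorTensorTensorComm_eq] using this }

lemma unitCoalg_toLinearMap : (unitCoalg (k := k) (H := H)).toLinearMap = Algebra.linearMap k H := rfl
lemma mulCoalg_toLinearMap : (mulCoalg (k := k) (H := H)).toLinearMap = LinearMap.mul' k H := rfl

end Bialg

section Bridge
variable {k : Type u} [CommRing k] {H : Type u} [Ring H] [Bialgebra k H]
variable {C : Type u} [AddCommGroup C] [Module k C] [Coalgebra k C]

lemma cu_k_eq : cu C k = (Coalgebra.counit : C →ₗ[k] k) := by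
  apply LinearMap.ext; intro x
  simp [cu, Algebra.linearMap_apply, Algebra.algebraMap_self]

lemma mul'_unit_left :
    LinearMap.mul' k H ∘ₗ TensorProduct.map (Algebra.linearMap k H) LinearMap.id =
      (TensorProduct.lid k H).toLinearMap := by
  ext r h
  simp [LinearMap.mul'_apply, Algebra.linearMap_apply, Algebra.smul_def]

lemma mul'_unit_right :
    LinearMap.mul' k H ∘ₗ TensorProduct.map LinearMap.id (Algebra.linearMap k H) =
      (TensorProduct.rid k H).toLinearMap := by
  ext h r
  simp [LinearMap.mul'_apply, Algebra.linearMap_apply, Algebra.smul_def, ← Algebra.commutes]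

lemma mul'_unit_unit :
    LinearMap.mul' k H ∘ₗ TensorProduct.map (Algebra.linearMap k H) (Algebra.linearMap k H) =
      Algebra.linearMap k H ∘ₗ LinearMap.mul' k k := by
  ext r s
  simp [LinearMap.mul'_apply, Algebra.linearMap_apply]

lemma cv_hat_left (σ : C →ₗ[k] k) (g : C →ₗ[k] H) :
    cv (Algebra.linearMap k H ∘ₗ σ) g =
      (TensorProduct.lid k H).toLinearMap ∘ₗ TensorProduct.map σ g ∘ₗ Coalgebra.comul := by
  have h : LinearMap.mul' k H ∘ₗ TensorProduct.map (Algebra.linearMap k H ∘ₗ σ) g =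
      (TensorProduct.lid k H).toLinearMap ∘ₗ TensorProduct.map σ g := by
    ext x y
    simp [LinearMap.mul'_apply, Algebra.linearMap_apply, Algebra.smul_def]
  rw [cv, ← LinearMap.comp_assoc, h, LinearMap.comp_assoc]

lemma cv_hat_right (σ : C →ₗ[k] k) (g : C →ₗ[k] H) :
    cv g (Algebra.linearMap k H ∘ₗ σ) =
      (TensorProduct.rid k H).toLinearMap ∘ₗ TensorProduct.map g σ ∘ₗ Coalgebra.comul := by
  have h : LinearMap.mul' k H ∘ₗ TensorProduct.map g (Algebra.linearMap k H ∘ₗ σ) =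
      (TensorProduct.rid k H).toLinearMap ∘ₗ TensorProduct.map g σ := by
    ext x y
    simp [LinearMap.mul'_apply, Algebra.linearMap_apply, Algebra.smul_def, ← Algebra.commutes]
  rw [cv, ← LinearMap.comp_assoc, h, LinearMap.comp_assoc]

lemma hat_cv (σ τ : C →ₗ[k] k) :
    Algebra.linearMap k H ∘ₗ cv σ τ =
      cv (Algebra.linearMap k H ∘ₗ σ) (Algebra.linearMap k H ∘ₗ τ) := by
  have h : LinearMap.mul' k H ∘ₗ
      TensorProduct.map (Algebra.linearMap k H ∘ₗ σ) (Algebra.linearMap k H ∘ₗ τ) =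
      Algebra.linearMap k H ∘ₗ LinearMap.mul' k k ∘ₗ TensorProduct.map σ τ := by
    ext x y
    simp [LinearMap.mul'_apply, Algebra.linearMap_apply]
  rw [cv, cv]
  conv_rhs => rw [← LinearMap.comp_assoc, h]
  simp only [LinearMap.comp_assoc]

lemma hat_cu : Algebra.linearMap k H ∘ₗ (Coalgebra.counit : C →ₗ[k] k) = cu C H := rfl

end Bridge

section Helpers2
variable {k : Type u} [CommRing k]

lemma lazy_mul_aux {C A : Type u} [AddCommGroup C] [Module k C] [Coalgebra k C]
    [Ring A] [Algebra k A] (s t m : C →ₗ[k] A)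
    (hs : cv s m = cv m s) (ht : cv t m = cv m t) :
    cv (cv s t) m = cv m (cv s t) := by
  rw [cv_assoc, ht, ← cv_assoc, hs, cv_assoc]

lemma lazy_inv_aux {C A : Type u} [AddCommGroup C] [Module k C] [Coalgebra k C]
    [Ring A] [Algebra k A] (s t m : C →ₗ[k] A)
    (hs : cv s m = cv m s) (h1 : cv s t = cu C A) (h2 : cv t s = cu C A) :
    cv t m = cv m t := by
  calc cv t m = cv t (cv m (cv s t)) := by rw [h1, cv_one_right]
    _ = cv t (cv (cv m s) t) := by rw [cv_assoc]
    _ = cv t (cv (cv s m) t) := by rw [hs]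
    _ = cv (cv t s) (cv m t) := by rw [cv_assoc, ← cv_assoc]
    _ = cv m t := by rw [h2, cv_one_left]

lemma cv_inv_mul {C A : Type u} [AddCommGroup C] [Module k C] [Coalgebra k C]
    [Ring A] [Algebra k A] (σ τ σ' τ' : C →ₗ[k] A)
    (h1 : cv τ τ' = cu C A) (h2 : cv σ σ' = cu C A) :
    cv (cv σ τ) (cv τ' σ') = cu C A := by
  rw [cv_assoc, ← cv_assoc τ, h1, cv_one_left, h2]

lemma cocycle_mul_aux {C A : Type u} [AddCommGroup C] [Module k C] [Coalgebra k C]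
    [Ring A] [Algebra k A] (s1 s2 s3 s4 t1 t2 t3 t4 : C →ₗ[k] A)
    (hs : cv s1 s2 = cv s3 s4) (ht : cv t1 t2 = cv t3 t4)
    (h1 : cv t1 s2 = cv s2 t1) (h2 : cv t3 s4 = cv s4 t3) :
    cv (cv s1 t1) (cv s2 t2) = cv (cv s3 t3) (cv s4 t4) := by
  calc cv (cv s1 t1) (cv s2 t2) = cv s1 (cv (cv t1 s2) t2) := by
        rw [cv_assoc, ← cv_assoc t1]
    _ = cv s1 (cv (cv s2 t1) t2) := by rw [h1]
    _ = cv (cv s1 s2) (cv t1 t2) := by rw [cv_assoc s2, ← cv_assoc]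
    _ = cv (cv s3 s4) (cv t3 t4) := by rw [hs, ht]
    _ = cv s3 (cv (cv s4 t3) t4) := by rw [cv_assoc, ← cv_assoc s4]
    _ = cv s3 (cv (cv t3 s4) t4) := by rw [h2]
    _ = cv (cv s3 t3) (cv s4 t4) := by rw [cv_assoc t3, ← cv_assoc]

lemma cocycle_inv_aux {C A : Type u} [AddCommGroup C] [Module k C] [Coalgebra k C]
    [Ring A] [Algebra k A] (s1 s2 s3 s4 t1 t2 t3 t4 : C →ₗ[k] A)
    (hs : cv s1 s2 = cv s3 s4)
    (i1 : cv t1 s1 = cu C A) (i2 : cv t2 s2 = cu C A)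
    (i3 : cv s3 t3 = cu C A) (i4 : cv s4 t4 = cu C A) :
    cv t2 t1 = cv t4 t3 := by
  have claim1 : cv (cv t2 t1) (cv s1 s2) = cu C A := by
    rw [cv_assoc, ← cv_assoc t1, i1, cv_one_left, i2]
  have claim2 : cv (cv s3 s4) (cv t4 t3) = cu C A := by
    rw [cv_assoc, ← cv_assoc s4, i4, cv_one_left, i3]
  calc cv t2 t1 = cv (cv t2 t1) (cv (cv s3 s4) (cv t4 t3)) := by rw [claim2, cv_one_right]
    _ = cv (cv t2 t1) (cv (cv s1 s2) (cv t4 t3)) := by rw [hs]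
    _ = cv (cv (cv t2 t1) (cv s1 s2)) (cv t4 t3) := (cv_assoc _ _ _).symm
    _ = cv t4 t3 := by rw [claim1, cv_one_left]

end Helpers2

section Main
variable {k : Type u} [CommRing k] {H : Type u} [Ring H] [Bialgebra k H]

/-- `σ(a₁,b₁) a₂ b₂` expanded on representations. -/
lemma lazyL_eq (σ : H ⊗[k] H →ₗ[k] k) (a b : H)
    (ra : Coalgebra.Repr k a (H × H)) (rb : Coalgebra.Repr k b (H × H)) :
    ((TensorProduct.lid k H).toLinearMap ∘ₗ TensorProduct.map σ mulH ∘ₗ Coalgebra.comul)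
        (a ⊗ₜ[k] b) =
      ∑ i ∈ ra.index, ∑ j ∈ rb.index,
        σ (ra.left i ⊗ₜ[k] rb.left j) • (ra.right i * rb.right j) := by
  simp only [LinearMap.comp_apply, TensorProduct.comul_tmul,
    TensorProduct.map_tmul]
  rw [← ra.eq, ← rb.eq]
  simp [TensorProduct.sum_tmul, TensorProduct.tmul_sum, map_sum, mulH,
    LinearMap.mul'_apply, TensorProduct.tensorTensorTensorComm_tmul,
      TensorProduct.AlgebraTensorModule.tensorTensorTensorComm_tmul]
  exact Finset.sum_comm

lemma lazyR_eq (σ : H ⊗[k] H →ₗ[k] k) (a b : H)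
    (ra : Coalgebra.Repr k a (H × H)) (rb : Coalgebra.Repr k b (H × H)) :
    ((TensorProduct.rid k H).toLinearMap ∘ₗ TensorProduct.map mulH σ ∘ₗ Coalgebra.comul)
        (a ⊗ₜ[k] b) =
      ∑ i ∈ ra.index, ∑ j ∈ rb.index,
        σ (ra.right i ⊗ₜ[k] rb.right j) • (ra.left i * rb.left j) := by
  simp only [LinearMap.comp_apply, TensorProduct.comul_tmul,
    TensorProduct.map_tmul]
  rw [← ra.eq, ← rb.eq]
  simp [TensorProduct.sum_tmul, TensorProduct.tmul_sum, map_sum, mulH,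
    LinearMap.mul'_apply, TensorProduct.tensorTensorTensorComm_tmul,
      TensorProduct.AlgebraTensorModule.tensorTensorTensorComm_tmul]
  exact Finset.sum_comm

/-- convolution on `H ⊗ (H ⊗ H)` expanded on representations. -/
lemma conv3_eq (f g : H ⊗[k] (H ⊗[k] H) →ₗ[k] k) (a b c : H)
    (ra : Coalgebra.Repr k a (H × H)) (rb : Coalgebra.Repr k b (H × H)) (rc : Coalgebra.Repr k c (H × H)) :
    conv f g (a ⊗ₜ[k] (b ⊗ₜ[k] c)) =
      ∑ i ∈ ra.index, ∑ j ∈ rb.index, ∑ l ∈ rc.index,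
        f (ra.left i ⊗ₜ[k] (rb.left j ⊗ₜ[k] rc.left l)) *
          g (ra.right i ⊗ₜ[k] (rb.right j ⊗ₜ[k] rc.right l)) := by
  simp only [conv, LinearMap.comp_apply, TensorProduct.comul_tmul,
    TensorProduct.map_tmul]
  rw [← ra.eq, ← rb.eq, ← rc.eq]
  simp [TensorProduct.sum_tmul, TensorProduct.tmul_sum, map_sum,
    LinearMap.mul'_apply, TensorProduct.tensorTensorTensorComm_tmul, Finset.mul_sum,
    TensorProduct.AlgebraTensorModule.tensorTensorTensorComm_tmul,
    Finset.sum_mul]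
  rw [Finset.sum_comm]
  conv_rhs => rw [Finset.sum_comm]
  exact Finset.sum_congr rfl fun j _ => Finset.sum_comm

lemma pr1_apply (b c : H) :
    (pr1 : H ⊗[k] H →ₗ[k] H) (b ⊗ₜ[k] c) = Coalgebra.counit (R := k) c • b := by
  simp [pr1]

lemma dropL3_apply (a b c : H) :
    (dropL3 : H ⊗[k] (H ⊗[k] H) →ₗ[k] H ⊗[k] H) (a ⊗ₜ[k] (b ⊗ₜ[k] c)) =
      Coalgebra.counit (R := k) a • (b ⊗ₜ[k] c) := by
  simp [dropL3]

/-- the coalgebra morphisms underlying the four maps in the cocycle conditions -/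
def pr1Coalg : H ⊗[k] H →ₗc[k] H :=
  (Coalgebra.TensorProduct.rid k k H).toCoalgHom.comp
    (Coalgebra.TensorProduct.map (CoalgHom.id k H) (Coalgebra.counitCoalgHom k H))

def Pco : H ⊗[k] (H ⊗[k] H) →ₗc[k] H ⊗[k] H :=
  Coalgebra.TensorProduct.map (CoalgHom.id k H) pr1Coalg

def Mco : H ⊗[k] (H ⊗[k] H) →ₗc[k] H ⊗[k] H :=
  (Coalgebra.TensorProduct.map mulCoalg (CoalgHom.id k H)).comp
    (Coalgebra.TensorProduct.assoc k k H H H).symm.toCoalgHom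

def Dco : H ⊗[k] (H ⊗[k] H) →ₗc[k] H ⊗[k] H :=
  (Coalgebra.TensorProduct.lid k (H ⊗[k] H)).toCoalgHom.comp
    (Coalgebra.TensorProduct.map (Coalgebra.counitCoalgHom k H) (CoalgHom.id k (H ⊗[k] H)))

def Nco : H ⊗[k] (H ⊗[k] H) →ₗc[k] H ⊗[k] H :=
  Coalgebra.TensorProduct.map (CoalgHom.id k H) mulCoalg

def i1co : H →ₗc[k] H ⊗[k] H :=
  (Coalgebra.TensorProduct.map unitCoalg (CoalgHom.id k H)).comp
    (Coalgebra.TensorProduct.lid k H).symm.toCoalgHom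

def i2co : H →ₗc[k] H ⊗[k] H :=
  (Coalgebra.TensorProduct.map (CoalgHom.id k H) unitCoalg).comp
    (Coalgebra.TensorProduct.rid k k H).symm.toCoalgHom

lemma Pco_toLinearMap :
    (Pco : H ⊗[k] (H ⊗[k] H) →ₗc[k] H ⊗[k] H).toLinearMap =
      TensorProduct.map LinearMap.id pr1 := rfl

lemma Mco_toLinearMap :
    (Mco : H ⊗[k] (H ⊗[k] H) →ₗc[k] H ⊗[k] H).toLinearMap =
      TensorProduct.map mulH LinearMap.id ∘ₗ (TensorProduct.assoc k H H H).symm.toLinearMap :=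
  rfl

lemma Dco_toLinearMap :
    (Dco : H ⊗[k] (H ⊗[k] H) →ₗc[k] H ⊗[k] H).toLinearMap = dropL3 := rfl

lemma Nco_toLinearMap :
    (Nco : H ⊗[k] (H ⊗[k] H) →ₗc[k] H ⊗[k] H).toLinearMap =
      TensorProduct.map LinearMap.id mulH := rfl

lemma i1co_apply (h : H) : (i1co : H →ₗc[k] H ⊗[k] H) h = (1 : H) ⊗ₜ[k] h := by
  show (TensorProduct.map (Algebra.linearMap k H) LinearMap.id)
    ((TensorProduct.lid k H).symm h) = _
  simp

lemma i2co_apply (h : H) : (i2co : H →ₗc[k] H ⊗[k] H) h = h ⊗ₜ[k] (1 : H) := by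
  show (TensorProduct.map LinearMap.id (Algebra.linearMap k H))
    ((TensorProduct.rid k H).symm h) = _
  simp

lemma isLazy2_iff (σ : H ⊗[k] H →ₗ[k] k) :
    IsLazy2 σ ↔ cv (Algebra.linearMap k H ∘ₗ σ) mulH = cv mulH (Algebra.linearMap k H ∘ₗ σ) := by
  rw [IsLazy2, ← cv_hat_left, ← cv_hat_right]

lemma normalized_iff (σ : H ⊗[k] H →ₗ[k] k) :
    Normalized σ ↔
      σ ∘ₗ (i1co : H →ₗc[k] H ⊗[k] H).toLinearMap = Coalgebra.counit ∧
      σ ∘ₗ (i2co : H →ₗc[k] H ⊗[k] H).toLinearMap = Coalgebra.counit := by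
  constructor
  · intro hn
    constructor <;> (apply LinearMap.ext; intro h)
    · rw [LinearMap.comp_apply]
      show σ (i1co h) = _
      rw [i1co_apply]; exact (hn h).1
    · rw [LinearMap.comp_apply]
      show σ (i2co h) = _
      rw [i2co_apply]; exact (hn h).2
  · intro ⟨h1, h2⟩ h
    constructor
    · rw [← i1co_apply (k := k) h]; exact LinearMap.congr_fun h1 h
    · rw [← i2co_apply (k := k) h]; exact LinearMap.congr_fun h2 h

lemma sum_contract_right (g : H ⊗[k] H →ₗ[k] k) (x : H) {c : H} (rc : Coalgebra.Repr k c (H × H)) :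
    ∑ l ∈ rc.index, Coalgebra.counit (R := k) (rc.left l) * g (x ⊗ₜ[k] rc.right l) =
      g (x ⊗ₜ[k] c) := by
  conv_rhs => rw [← sum_counit_smul rc]
  rw [TensorProduct.tmul_sum, map_sum]
  simp [TensorProduct.tmul_smul, smul_eq_mul]

lemma sum_contract_left (g : H ⊗[k] H →ₗ[k] k) (x : H) {c : H} (rc : Coalgebra.Repr k c (H × H)) :
    ∑ l ∈ rc.index, g (x ⊗ₜ[k] rc.left l) * Coalgebra.counit (R := k) (rc.right l) =
      g (x ⊗ₜ[k] c) := by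
  conv_rhs => rw [← sum_smul_counit rc]
  rw [TensorProduct.tmul_sum, map_sum]
  simp [TensorProduct.tmul_smul, smul_eq_mul, mul_comm]

lemma sum_contract_right' (g : H ⊗[k] H →ₗ[k] k) (y : H) {a : H} (ra : Coalgebra.Repr k a (H × H)) :
    ∑ i ∈ ra.index, Coalgebra.counit (R := k) (ra.left i) * g (ra.right i ⊗ₜ[k] y) =
      g (a ⊗ₜ[k] y) := by
  conv_rhs => rw [← sum_counit_smul ra]
  rw [TensorProduct.sum_tmul, map_sum]
  refine Finset.sum_congr rfl fun i _ => ?_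
  rw [← TensorProduct.smul_tmul', map_smul, smul_eq_mul]

lemma sum_contract_left' (g : H ⊗[k] H →ₗ[k] k) (y : H) {a : H} (ra : Coalgebra.Repr k a (H × H)) :
    ∑ i ∈ ra.index, g (ra.left i ⊗ₜ[k] y) * Coalgebra.counit (R := k) (ra.right i) =
      g (a ⊗ₜ[k] y) := by
  conv_rhs => rw [← sum_smul_counit ra]
  rw [TensorProduct.sum_tmul, map_sum]
  refine Finset.sum_congr rfl fun i _ => ?_
  rw [← TensorProduct.smul_tmul', map_smul, smul_eq_mul]
  ring

/-- commutation of a lazy functional on legs (1,2) with any functional on legs (12,3) -/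
lemma commPM (τ g : H ⊗[k] H →ₗ[k] k) (hτ : IsLazy2 τ) :
    conv (τ ∘ₗ TensorProduct.map LinearMap.id pr1)
      (g ∘ₗ TensorProduct.map mulH LinearMap.id ∘ₗ
        (TensorProduct.assoc k H H H).symm.toLinearMap) =
    conv (g ∘ₗ TensorProduct.map mulH LinearMap.id ∘ₗ
        (TensorProduct.assoc k H H H).symm.toLinearMap)
      (τ ∘ₗ TensorProduct.map LinearMap.id pr1) := by
  ext a b c
  set ra : Coalgebra.Repr k a (H × H) := .arbitrary k a
  set rb : Coalgebra.Repr k b (H × H) := .arbitrary k b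
  set rc : Coalgebra.Repr k c (H × H) := .arbitrary k c
  show conv _ _ (a ⊗ₜ[k] (b ⊗ₜ[k] c)) = conv _ _ (a ⊗ₜ[k] (b ⊗ₜ[k] c))
  rw [conv3_eq _ _ a b c ra rb rc, conv3_eq _ _ a b c ra rb rc]
  calc ∑ i ∈ ra.index, ∑ j ∈ rb.index, ∑ l ∈ rc.index,
        (τ ∘ₗ TensorProduct.map LinearMap.id pr1)
            (ra.left i ⊗ₜ[k] (rb.left j ⊗ₜ[k] rc.left l)) *
          (g ∘ₗ TensorProduct.map mulH LinearMap.id ∘ₗ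
              (TensorProduct.assoc k H H H).symm.toLinearMap)
            (ra.right i ⊗ₜ[k] (rb.right j ⊗ₜ[k] rc.right l))
      = ∑ i ∈ ra.index, ∑ j ∈ rb.index,
          τ (ra.left i ⊗ₜ[k] rb.left j) *
            g ((ra.right i * rb.right j) ⊗ₜ[k] c) := by
        refine Finset.sum_congr rfl fun i _ => Finset.sum_congr rfl fun j _ => ?_
        simp only [LinearMap.comp_apply, TensorProduct.map_tmul, LinearMap.id_coe, id_eq,
          pr1_apply, TensorProduct.tmul_smul, map_smul, smul_eq_mul, mulH,
          LinearEquiv.coe_coe, TensorProduct.assoc_symm_tmul, LinearMap.mul'_apply]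
        rw [← sum_contract_right g (ra.right i * rb.right j) rc, Finset.mul_sum]
        exact Finset.sum_congr rfl fun l _ => by ring
    _ = g (((TensorProduct.lid k H).toLinearMap ∘ₗ TensorProduct.map τ mulH ∘ₗ
          Coalgebra.comul) (a ⊗ₜ[k] b) ⊗ₜ[k] c) := by
        rw [lazyL_eq τ a b ra rb, TensorProduct.sum_tmul, map_sum]
        refine Finset.sum_congr rfl fun i _ => ?_
        rw [TensorProduct.sum_tmul, map_sum]
        refine Finset.sum_congr rfl fun j _ => ?_
        rw [← TensorProduct.smul_tmul', map_smul, smul_eq_mul]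
    _ = g (((TensorProduct.rid k H).toLinearMap ∘ₗ TensorProduct.map mulH τ ∘ₗ
          Coalgebra.comul) (a ⊗ₜ[k] b) ⊗ₜ[k] c) := by rw [hτ]
    _ = ∑ i ∈ ra.index, ∑ j ∈ rb.index,
          g ((ra.left i * rb.left j) ⊗ₜ[k] c) * τ (ra.right i ⊗ₜ[k] rb.right j) := by
        rw [lazyR_eq τ a b ra rb, TensorProduct.sum_tmul, map_sum]
        refine Finset.sum_congr rfl fun i _ => ?_
        rw [TensorProduct.sum_tmul, map_sum]
        refine Finset.sum_congr rfl fun j _ => ?_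
        rw [← TensorProduct.smul_tmul', map_smul, smul_eq_mul]
        ring
    _ = ∑ i ∈ ra.index, ∑ j ∈ rb.index, ∑ l ∈ rc.index,
        (g ∘ₗ TensorProduct.map mulH LinearMap.id ∘ₗ
            (TensorProduct.assoc k H H H).symm.toLinearMap)
          (ra.left i ⊗ₜ[k] (rb.left j ⊗ₜ[k] rc.left l)) *
          (τ ∘ₗ TensorProduct.map LinearMap.id pr1)
            (ra.right i ⊗ₜ[k] (rb.right j ⊗ₜ[k] rc.right l)) := by
        refine Finset.sum_congr rfl fun i _ => Finset.sum_congr rfl fun j _ => ?_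
        simp only [LinearMap.comp_apply, TensorProduct.map_tmul, LinearMap.id_coe, id_eq,
          pr1_apply, TensorProduct.tmul_smul, map_smul, smul_eq_mul, mulH,
          LinearEquiv.coe_coe, TensorProduct.assoc_symm_tmul, LinearMap.mul'_apply]
        rw [← sum_contract_left g (ra.left i * rb.left j) rc, Finset.sum_mul]
        exact Finset.sum_congr rfl fun l _ => by ring

/-- commutation of a lazy functional on legs (2,3) with any functional on legs (1,23) -/
lemma commDN (τ g : H ⊗[k] H →ₗ[k] k) (hτ : IsLazy2 τ) :
    conv (τ ∘ₗ dropL3) (g ∘ₗ TensorProduct.map LinearMap.id mulH) =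
    conv (g ∘ₗ TensorProduct.map LinearMap.id mulH) (τ ∘ₗ dropL3) := by
  ext a b c
  set ra : Coalgebra.Repr k a (H × H) := .arbitrary k a
  set rb : Coalgebra.Repr k b (H × H) := .arbitrary k b
  set rc : Coalgebra.Repr k c (H × H) := .arbitrary k c
  show conv _ _ (a ⊗ₜ[k] (b ⊗ₜ[k] c)) = conv _ _ (a ⊗ₜ[k] (b ⊗ₜ[k] c))
  rw [conv3_eq _ _ a b c ra rb rc, conv3_eq _ _ a b c ra rb rc]
  calc ∑ i ∈ ra.index, ∑ j ∈ rb.index, ∑ l ∈ rc.index,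
        (τ ∘ₗ dropL3) (ra.left i ⊗ₜ[k] (rb.left j ⊗ₜ[k] rc.left l)) *
          (g ∘ₗ TensorProduct.map LinearMap.id mulH)
            (ra.right i ⊗ₜ[k] (rb.right j ⊗ₜ[k] rc.right l))
      = ∑ j ∈ rb.index, ∑ l ∈ rc.index,
          τ (rb.left j ⊗ₜ[k] rc.left l) *
            g (a ⊗ₜ[k] (rb.right j * rc.right l)) := by
        rw [Finset.sum_comm]
        refine Finset.sum_congr rfl fun j _ => ?_
        rw [Finset.sum_comm]
        refine Finset.sum_congr rfl fun l _ => ?_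
        simp only [LinearMap.comp_apply, TensorProduct.map_tmul, LinearMap.id_coe, id_eq,
          dropL3_apply, map_smul, smul_eq_mul, mulH, LinearMap.mul'_apply]
        rw [← sum_contract_right' g (rb.right j * rc.right l) ra, Finset.mul_sum]
        exact Finset.sum_congr rfl fun i _ => by ring
    _ = g (a ⊗ₜ[k] (((TensorProduct.lid k H).toLinearMap ∘ₗ TensorProduct.map τ mulH ∘ₗ
          Coalgebra.comul) (b ⊗ₜ[k] c))) := by
        rw [lazyL_eq τ b c rb rc, TensorProduct.tmul_sum, map_sum]
        refine Finset.sum_congr rfl fun j _ => ?_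
        rw [TensorProduct.tmul_sum, map_sum]
        refine Finset.sum_congr rfl fun l _ => ?_
        rw [TensorProduct.tmul_smul, map_smul, smul_eq_mul]
    _ = g (a ⊗ₜ[k] (((TensorProduct.rid k H).toLinearMap ∘ₗ TensorProduct.map mulH τ ∘ₗ
          Coalgebra.comul) (b ⊗ₜ[k] c))) := by rw [hτ]
    _ = ∑ j ∈ rb.index, ∑ l ∈ rc.index,
          g (a ⊗ₜ[k] (rb.left j * rc.left l)) * τ (rb.right j ⊗ₜ[k] rc.right l) := by
        rw [lazyR_eq τ b c rb rc, TensorProduct.tmul_sum, map_sum]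
        refine Finset.sum_congr rfl fun j _ => ?_
        rw [TensorProduct.tmul_sum, map_sum]
        refine Finset.sum_congr rfl fun l _ => ?_
        rw [TensorProduct.tmul_smul, map_smul, smul_eq_mul]
        ring
    _ = ∑ i ∈ ra.index, ∑ j ∈ rb.index, ∑ l ∈ rc.index,
        (g ∘ₗ TensorProduct.map LinearMap.id mulH)
          (ra.left i ⊗ₜ[k] (rb.left j ⊗ₜ[k] rc.left l)) *
          (τ ∘ₗ dropL3) (ra.right i ⊗ₜ[k] (rb.right j ⊗ₜ[k] rc.right l)) := by
        symm
        rw [Finset.sum_comm]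
        refine Finset.sum_congr rfl fun j _ => ?_
        rw [Finset.sum_comm]
        refine Finset.sum_congr rfl fun l _ => ?_
        simp only [LinearMap.comp_apply, TensorProduct.map_tmul, LinearMap.id_coe, id_eq,
          dropL3_apply, map_smul, smul_eq_mul, mulH, LinearMap.mul'_apply]
        rw [← sum_contract_left' g (rb.left j * rc.left l) ra, Finset.sum_mul]
        exact Finset.sum_congr rfl fun i _ => by ring

lemma conv_eq_cv {C : Type u} [AddCommGroup C] [Module k C] [Coalgebra k C]
    (f g : C →ₗ[k] k) : conv f g = cv f g := rfl

lemma counit_normalized : Normalized (Coalgebra.counit : H ⊗[k] H →ₗ[k] k) := by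
  rw [normalized_iff]
  exact ⟨(i1co (k := k) (H := H)).counit_comp, (i2co (k := k) (H := H)).counit_comp⟩

lemma counit_conv_counit :
    conv (Coalgebra.counit : H ⊗[k] H →ₗ[k] k) Coalgebra.counit = Coalgebra.counit := by
  rw [conv_eq_cv, ← cu_k_eq]
  exact cv_one_right _

lemma counit_reg2 : Reg2 (Coalgebra.counit : H ⊗[k] H →ₗ[k] k) :=
  ⟨counit_normalized, Coalgebra.counit, counit_conv_counit, counit_conv_counit⟩

lemma counit_lazy : IsLazy2 (Coalgebra.counit : H ⊗[k] H →ₗ[k] k) := by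
  rw [isLazy2_iff, hat_cu, cv_one_left, cv_one_right]

-- the four coalgebra-morphism identities, phrased on the raw linear maps
lemma P_counit : (Coalgebra.counit : H ⊗[k] H →ₗ[k] k) ∘ₗ
    TensorProduct.map (LinearMap.id : H →ₗ[k] H) pr1 = Coalgebra.counit := by
  rw [← Pco_toLinearMap]; exact Pco.counit_comp

lemma M_counit : (Coalgebra.counit : H ⊗[k] H →ₗ[k] k) ∘ₗ
    (TensorProduct.map mulH LinearMap.id ∘ₗ (TensorProduct.assoc k H H H).symm.toLinearMap) =
    Coalgebra.counit := by
  rw [← Mco_toLinearMap]; exact Mco.counit_comp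

lemma D_counit : (Coalgebra.counit : H ⊗[k] H →ₗ[k] k) ∘ₗ (dropL3 : H ⊗[k] (H ⊗[k] H) →ₗ[k] H ⊗[k] H) =
    Coalgebra.counit := by
  rw [← Dco_toLinearMap]; exact Dco.counit_comp

lemma N_counit : (Coalgebra.counit : H ⊗[k] H →ₗ[k] k) ∘ₗ
    TensorProduct.map (LinearMap.id : H →ₗ[k] H) mulH = Coalgebra.counit := by
  rw [← Nco_toLinearMap]; exact Nco.counit_comp

lemma counit_cocycle : IsLeftCocycle (Coalgebra.counit : H ⊗[k] H →ₗ[k] k) := by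
  rw [IsLeftCocycle, P_counit, M_counit, D_counit, N_counit]

lemma P_comp (x y : H ⊗[k] H →ₗ[k] k) :
    conv x y ∘ₗ TensorProduct.map (LinearMap.id : H →ₗ[k] H) pr1 =
      conv (x ∘ₗ TensorProduct.map LinearMap.id pr1) (y ∘ₗ TensorProduct.map LinearMap.id pr1) := by
  rw [conv_eq_cv, conv_eq_cv, ← Pco_toLinearMap, cv_comp]

lemma M_comp (x y : H ⊗[k] H →ₗ[k] k) :
    conv x y ∘ₗ (TensorProduct.map mulH LinearMap.id ∘ₗ
        (TensorProduct.assoc k H H H).symm.toLinearMap) =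
      conv (x ∘ₗ (TensorProduct.map mulH LinearMap.id ∘ₗ
          (TensorProduct.assoc k H H H).symm.toLinearMap))
        (y ∘ₗ (TensorProduct.map mulH LinearMap.id ∘ₗ
          (TensorProduct.assoc k H H H).symm.toLinearMap)) := by
  rw [conv_eq_cv, conv_eq_cv, ← Mco_toLinearMap, cv_comp]

lemma D_comp (x y : H ⊗[k] H →ₗ[k] k) :
    conv x y ∘ₗ (dropL3 : H ⊗[k] (H ⊗[k] H) →ₗ[k] H ⊗[k] H) =
      conv (x ∘ₗ dropL3) (y ∘ₗ dropL3) := by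
  rw [conv_eq_cv, conv_eq_cv, ← Dco_toLinearMap, cv_comp]

lemma N_comp (x y : H ⊗[k] H →ₗ[k] k) :
    conv x y ∘ₗ TensorProduct.map (LinearMap.id : H →ₗ[k] H) mulH =
      conv (x ∘ₗ TensorProduct.map LinearMap.id mulH) (y ∘ₗ TensorProduct.map LinearMap.id mulH) := by
  rw [conv_eq_cv, conv_eq_cv, ← Nco_toLinearMap, cv_comp]

lemma part2 (σ τ : H ⊗[k] H →ₗ[k] k) (hσr : Reg2 σ) (hσl : IsLazy2 σ) (hσc : IsLeftCocycle σ)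
    (hτr : Reg2 τ) (hτl : IsLazy2 τ) (hτc : IsLeftCocycle τ) :
    Reg2 (conv σ τ) ∧ IsLazy2 (conv σ τ) ∧ IsLeftCocycle (conv σ τ) := by
  obtain ⟨hσn, σ', hσ1, hσ2⟩ := hσr
  obtain ⟨hτn, τ', hτ1, hτ2⟩ := hτr
  rw [conv_eq_cv, ← cu_k_eq] at hσ1 hσ2 hτ1 hτ2
  refine ⟨⟨?_, conv τ' σ', ?_, ?_⟩, ?_, ?_⟩
  · -- normalized
    rw [normalized_iff]
    rw [normalized_iff] at hσn hτn
    constructor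
    · rw [conv_eq_cv, cv_comp i1co σ τ, hσn.1, hτn.1, ← cu_k_eq]
      exact cv_one_right _
    · rw [conv_eq_cv, cv_comp i2co σ τ, hσn.2, hτn.2, ← cu_k_eq]
      exact cv_one_right _
  · -- right inverse
    simp only [conv_eq_cv]
    rw [← cu_k_eq]
    exact cv_inv_mul σ τ σ' τ' hτ1 hσ1
  · -- left inverse
    simp only [conv_eq_cv]
    rw [← cu_k_eq]
    exact cv_inv_mul τ' σ' τ σ hσ2 hτ2
  · -- lazy
    rw [isLazy2_iff] at hσl hτl ⊢
    rw [conv_eq_cv, hat_cv]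
    exact lazy_mul_aux _ _ _ hσl hτl
  · -- cocycle
    rw [IsLeftCocycle] at hσc hτc ⊢
    rw [P_comp, M_comp, D_comp, N_comp]
    have c1 := commPM τ σ hτl
    have c2 := commDN τ σ hτl
    simp only [conv_eq_cv] at hσc hτc c1 c2 ⊢
    exact cocycle_mul_aux _ _ _ _ _ _ _ _ hσc hτc c1 c2

lemma part3 (σ τ : H ⊗[k] H →ₗ[k] k) (hσr : Reg2 σ) (hσl : IsLazy2 σ) (hσc : IsLeftCocycle σ)
    (hστ : conv σ τ = (Coalgebra.counit : H ⊗[k] H →ₗ[k] k))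
    (hτσ : conv τ σ = (Coalgebra.counit : H ⊗[k] H →ₗ[k] k)) :
    Reg2 τ ∧ IsLazy2 τ ∧ IsLeftCocycle τ := by
  obtain ⟨hσn, -⟩ := hσr
  rw [normalized_iff] at hσn
  have hστ' : cv σ τ = cu (H ⊗[k] H) k := by rw [← conv_eq_cv, hστ, cu_k_eq]
  have hτσ' : cv τ σ = cu (H ⊗[k] H) k := by rw [← conv_eq_cv, hτσ, cu_k_eq]
  have hτl : IsLazy2 τ := by
    rw [isLazy2_iff] at hσl ⊢
    refine lazy_inv_aux (Algebra.linearMap k H ∘ₗ σ) (Algebra.linearMap k H ∘ₗ τ) mulH hσl ?_ ?_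
    · rw [← hat_cv, hστ']
      rw [cu_k_eq, hat_cu]
    · rw [← hat_cv, hτσ']
      rw [cu_k_eq, hat_cu]
  refine ⟨⟨?_, σ, hτσ, hστ⟩, hτl, ?_⟩
  · -- normalized
    rw [normalized_iff]
    constructor
    · calc τ ∘ₗ (i1co : H →ₗc[k] H ⊗[k] H).toLinearMap
          = cv (τ ∘ₗ (i1co : H →ₗc[k] H ⊗[k] H).toLinearMap) (cu H k) := (cv_one_right _).symm
        _ = cv (τ ∘ₗ (i1co : H →ₗc[k] H ⊗[k] H).toLinearMap)
              (σ ∘ₗ (i1co : H →ₗc[k] H ⊗[k] H).toLinearMap) := by rw [hσn.1, cu_k_eq]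
        _ = cv τ σ ∘ₗ (i1co : H →ₗc[k] H ⊗[k] H).toLinearMap := (cv_comp _ _ _).symm
        _ = Coalgebra.counit := by rw [← conv_eq_cv, hτσ]; exact i1co.counit_comp
    · calc τ ∘ₗ (i2co : H →ₗc[k] H ⊗[k] H).toLinearMap
          = cv (τ ∘ₗ (i2co : H →ₗc[k] H ⊗[k] H).toLinearMap) (cu H k) := (cv_one_right _).symm
        _ = cv (τ ∘ₗ (i2co : H →ₗc[k] H ⊗[k] H).toLinearMap)
              (σ ∘ₗ (i2co : H →ₗc[k] H ⊗[k] H).toLinearMap) := by rw [hσn.2, cu_k_eq]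
        _ = cv τ σ ∘ₗ (i2co : H →ₗc[k] H ⊗[k] H).toLinearMap := (cv_comp _ _ _).symm
        _ = Coalgebra.counit := by rw [← conv_eq_cv, hτσ]; exact i2co.counit_comp
  · -- cocycle
    have key : ∀ (φ : (H ⊗[k] (H ⊗[k] H)) →ₗc[k] H ⊗[k] H) (x y : H ⊗[k] H →ₗ[k] k),
        conv x y = (Coalgebra.counit : H ⊗[k] H →ₗ[k] k) →
        cv (x ∘ₗ φ.toLinearMap) (y ∘ₗ φ.toLinearMap) = cu (H ⊗[k] (H ⊗[k] H)) k := by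
      intro φ x y hxy
      rw [← cv_comp, ← conv_eq_cv, hxy, φ.counit_comp, cu_k_eq]
    have h21 : cv (τ ∘ₗ (TensorProduct.map mulH LinearMap.id ∘ₗ
          (TensorProduct.assoc k H H H).symm.toLinearMap))
          (τ ∘ₗ TensorProduct.map (LinearMap.id : H →ₗ[k] H) pr1) =
        cv (τ ∘ₗ TensorProduct.map (LinearMap.id : H →ₗ[k] H) mulH) (τ ∘ₗ dropL3) := by
      refine cocycle_inv_aux
        (σ ∘ₗ TensorProduct.map LinearMap.id pr1)
        (σ ∘ₗ (TensorProduct.map mulH LinearMap.id ∘ₗ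
          (TensorProduct.assoc k H H H).symm.toLinearMap))
        (σ ∘ₗ dropL3) (σ ∘ₗ TensorProduct.map LinearMap.id mulH)
        _ _ _ _ ?_ ?_ ?_ ?_ ?_
      · rw [IsLeftCocycle] at hσc
        simp only [conv_eq_cv] at hσc
        exact hσc
      · exact key Pco τ σ hτσ
      · exact key Mco τ σ hτσ
      · exact key Dco σ τ hστ
      · exact key Nco σ τ hστ
    rw [IsLeftCocycle]
    have c1 := commPM τ τ hτl
    have c2 := commDN τ τ hτl
    simp only [conv_eq_cv] at c1 c2 ⊢
    rw [c1, h21, ← c2]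

end Main
end Infra

/-- `Z²_L(H)` is a group under convolution: the counit is a normalized lazy 2-cocycle, the
convolution of two normalized convolution-invertible lazy 2-cocycles is again a lazy
2-cocycle, and the convolution inverse of a lazy 2-cocycle is a lazy 2-cocycle. -/
theorem stmt5 {k : Type u} [Field k] {H : Type u} [Ring H] [HopfAlgebra k H] :
    (Reg2 (Coalgebra.counit : H ⊗[k] H →ₗ[k] k) ∧
      IsLazy2 (Coalgebra.counit : H ⊗[k] H →ₗ[k] k) ∧
      IsLeftCocycle (Coalgebra.counit : H ⊗[k] H →ₗ[k] k)) ∧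
    (∀ σ τ : H ⊗[k] H →ₗ[k] k, Reg2 σ → IsLazy2 σ → IsLeftCocycle σ →
      Reg2 τ → IsLazy2 τ → IsLeftCocycle τ →
      Reg2 (conv σ τ) ∧ IsLazy2 (conv σ τ) ∧ IsLeftCocycle (conv σ τ)) ∧
    (∀ σ τ : H ⊗[k] H →ₗ[k] k, Reg2 σ → IsLazy2 σ → IsLeftCocycle σ →
      conv σ τ = (Coalgebra.counit : H ⊗[k] H →ₗ[k] k) →
      conv τ σ = (Coalgebra.counit : H ⊗[k] H →ₗ[k] k) →
      Reg2 τ ∧ IsLazy2 τ ∧ IsLeftCocycle τ) :=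
  ⟨⟨counit_reg2, counit_lazy, counit_cocycle⟩, part2, part3⟩

end
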